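/- Let E be a finite-dimensional real inner product space, f : E → ℝ continuously differentiable, and g : E → ℝ ∪ {+∞}. Let {x^k}_{k≥0} ⊆ E and reals γ_k with 0 < γ̲ ≤ γ_k for all k, and suppose that for every k the point x^{k+1} is a global minimizer over E of the function u ↦ ⟨∇f(x^k), u − x^k⟩ + (1/(2γ_k))·‖u − x^k‖² + g(u) (i.e., x^{k+1} ∈ Prox_{γ_k g}(x^k − γ_k ∇f(x^k))). If a subsequence {x^{k_j}} satisfies x^{k_j} → x̄ and x^{k_j} − x^{k_j−1} → 0, then limsup_{j→∞} Θ(x^{k_j}) ≤ Θ(x̄), where Θ := f + g. -/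

import Mathlib

open scoped RealInnerProductSpace

/-- The verification of condition H3 in the proof of Theorem 4.1: along a proximal
gradient sequence (with step sizes bounded below), if a subsequence converges to `x̄`
together with vanishing consecutive differences, then
`limsup_j Θ(x^{k_j}) ≤ Θ(x̄)` where `Θ = f + g`. -/
theorem stmt_16 {E : Type*} [NormedAddCommGroup E] [InnerProductSpace ℝ E]
    [FiniteDimensional ℝ E]
    (f : E → ℝ) (f' : E → E) (hf : ∀ z : E, HasGradientAt f (f' z) z)
    (hf'cont : Continuous f')
    (g : E → EReal)
    (x : ℕ → E) (γ : ℕ → ℝ) (γlow : ℝ) (hγlow : 0 < γlow) (hγ : ∀ k, γlow ≤ γ k)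
    (hprox : ∀ k : ℕ, ∀ u : E,
      ((⟪f' (x k), x (k + 1) - x k⟫ + (1 / (2 * γ k)) * ‖x (k + 1) - x k‖ ^ 2 : ℝ) : EReal)
          + g (x (k + 1)) ≤
        ((⟪f' (x k), u - x k⟫ + (1 / (2 * γ k)) * ‖u - x k‖ ^ 2 : ℝ) : EReal) + g u)
    (xbar : E) (ks : ℕ → ℕ) (hks : StrictMono ks)
    (hxconv : Filter.Tendsto (fun j => x (ks j)) Filter.atTop (nhds xbar))
    (hdiff : Filter.Tendsto (fun j => x (ks j) - x (ks j - 1)) Filter.atTop (nhds 0)) :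
    Filter.limsup (fun j => ((f (x (ks j)) : EReal) + g (x (ks j)))) Filter.atTop ≤
      (f xbar : EReal) + g xbar := by
  classical
  -- previous iterates converge to xbar as well
  have hyconv : Filter.Tendsto (fun j => x (ks j - 1)) Filter.atTop (nhds xbar) := by
    have := hxconv.sub hdiff
    simp only [sub_zero] at this
    convert this using 1
    funext j
    abel
  -- f is continuous
  have hfcont : Continuous f := by
    rw [continuous_iff_continuousAt]
    exact fun z => (hf z).hasFDerivAt.continuousAt
  -- the correction term
  set b : ℕ → ℝ := fun j =>
    ⟪f' (x (ks j - 1)), xbar - x (ks j)⟫ + (1 / (2 * γlow)) * ‖xbar - x (ks j - 1)‖ ^ 2 with hb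
  have hbconv : Filter.Tendsto b Filter.atTop (nhds 0) := by
    have h1 : Filter.Tendsto (fun j => ⟪f' (x (ks j - 1)), xbar - x (ks j)⟫)
        Filter.atTop (nhds (⟪f' xbar, (0 : E)⟫)) :=
      ((hf'cont.tendsto xbar).comp hyconv).inner (tendsto_const_nhds.sub hxconv |>.congr'
        (by filter_upwards with j using rfl) |>.trans_eq (by simp))
    have h2 : Filter.Tendsto (fun j => ‖xbar - x (ks j - 1)‖ ^ 2)
        Filter.atTop (nhds 0) := by
      have h := (((tendsto_const_nhds (x := xbar)).sub hyconv).norm).pow 2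
      simpa using h
    have h3 := h1.add ((tendsto_const_nhds (x := (1 / (2 * γlow) : ℝ))).mul h2)
    rw [hb]
    simpa only [inner_zero_right, mul_zero, add_zero] using h3
  have hcconv : Filter.Tendsto (fun j => f (x (ks j)) + b j) Filter.atTop (nhds (f xbar)) := by
    have := ((hfcont.tendsto xbar).comp hxconv).add hbconv
    simpa using this
  -- the key eventual inequality
  have hev : ∀ᶠ j in Filter.atTop,
      (f (x (ks j)) : EReal) + g (x (ks j)) ≤ ((f (x (ks j)) + b j : ℝ) : EReal) + g xbar := by
    filter_upwards [Filter.eventually_ge_atTop 1] with j hj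
    have hks1 : 1 ≤ ks j := le_trans hj (hks.le_apply)
    set k := ks j - 1 with hk
    have hk1 : k + 1 = ks j := Nat.succ_pred_eq_of_pos hks1
    have hp := hprox k xbar
    rw [hk1] at hp
    set F := f (x (ks j))
    set A : ℝ := ⟪f' (x k), x (ks j) - x k⟫ + 1 / (2 * γ k) * ‖x (ks j) - x k‖ ^ 2
    set B : ℝ := ⟪f' (x k), xbar - x k⟫ + 1 / (2 * γ k) * ‖xbar - x k‖ ^ 2
    have hγk : 0 < γ k := lt_of_lt_of_le hγlow (hγ k)
    have hreal : F - A + B ≤ F + b j := by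
      have hinner : ⟪f' (x k), xbar - x k⟫ - ⟪f' (x k), x (ks j) - x k⟫
          = ⟪f' (x k), xbar - x (ks j)⟫ := by
        rw [← inner_sub_right]
        congr 1
        abel
      have hcle : 1 / (2 * γ k) ≤ 1 / (2 * γlow) :=
        one_div_le_one_div_of_le (by linarith) (by linarith [hγ k])
      have hc0 : (0 : ℝ) ≤ 1 / (2 * γ k) := by positivity
      have hm : 1 / (2 * γ k) * ‖xbar - x k‖ ^ 2 ≤ 1 / (2 * γlow) * ‖xbar - x k‖ ^ 2 :=
        mul_le_mul_of_nonneg_right hcle (sq_nonneg _)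
      have hm2 : (0 : ℝ) ≤ 1 / (2 * γ k) * ‖x (ks j) - x k‖ ^ 2 :=
        mul_nonneg hc0 (sq_nonneg _)
      simp only [hb, A, B]
      nlinarith [hinner]
    calc (F : EReal) + g (x (ks j))
        = ((F - A : ℝ) : EReal) + (((A : ℝ) : EReal) + g (x (ks j))) := by
          rw [← add_assoc, ← EReal.coe_add]; norm_num
      _ ≤ ((F - A : ℝ) : EReal) + (((B : ℝ) : EReal) + g xbar) := add_le_add le_rfl hp
      _ = ((F - A + B : ℝ) : EReal) + g xbar := by rw [← add_assoc, ← EReal.coe_add]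
      _ ≤ ((F + b j : ℝ) : EReal) + g xbar :=
          add_le_add (EReal.coe_le_coe_iff.2 hreal) le_rfl
  -- conclude by cases on g xbar
  have main : ∀ K : EReal,
      (∀ᶠ j in Filter.atTop,
        (f (x (ks j)) : EReal) + g (x (ks j)) ≤ ((f (x (ks j)) + b j : ℝ) : EReal) + K) →
      Filter.limsup (fun j => ((f (x (ks j)) : EReal) + g (x (ks j)))) Filter.atTop ≤
        (f xbar : EReal) + K := by
    intro K hK
    induction K using EReal.rec with
    | bot =>
        rw [EReal.add_bot]
        refine Filter.limsup_le_of_le (by isBoundedDefault) ?_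
        filter_upwards [hK] with j hj
        simpa [EReal.add_bot] using hj
    | coe r =>
        have hlim : Filter.Tendsto (fun j => ((f (x (ks j)) + b j : ℝ) : EReal) + (r : EReal))
            Filter.atTop (nhds ((f xbar : EReal) + (r : EReal))) := by
          simp only [← EReal.coe_add]
          exact EReal.tendsto_coe.2 (hcconv.add tendsto_const_nhds)
        calc Filter.limsup (fun j => ((f (x (ks j)) : EReal) + g (x (ks j)))) Filter.atTop
            ≤ Filter.limsup (fun j => ((f (x (ks j)) + b j : ℝ) : EReal) + (r : EReal))
                Filter.atTop := Filter.limsup_le_limsup hK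
          _ = (f xbar : EReal) + (r : EReal) := hlim.limsup_eq
    | top =>
        rw [EReal.coe_add_top]
        exact le_top
  exact main (g xbar) hev
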